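/- For every integer n ≥ 1, sup over r > 0 and over nonzero bivariate polynomials P ∈ ℂ[x,y] of total degree at most n of the ratio max_{0≤x≤2r} |P(x, e^x)| / max_{0≤x≤r} |P(x, e^x)| is at least 2^{(n+2 choose 2) − 1}. Consequently the exponent function φ(n) = n² is best possible (up to a constant factor) in order for the generalized Siciak extremal function Φ_{[0,r]}(·; V, φ) of a real segment, with V_n = {P(x,e^x) : deg P ≤ n}, to be bounded on the doubled segment [0,2r] uniformly in n. -/

import Mathlib

open Finset MvPolynomial

noncomputable section DoublingAuxSection

/-- Index set of monomials `x^a y^b` with `a + b ≤ n`. -/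
def expS (n : ℕ) : Finset (ℕ × ℕ) := (Finset.range (n+1)).biUnion fun k => Finset.HasAntidiagonal.antidiagonal k

lemma mem_expS {n : ℕ} {p : ℕ × ℕ} : p ∈ expS n ↔ p.1 + p.2 ≤ n := by
  simp only [expS, Finset.mem_biUnion, Finset.mem_range, Finset.HasAntidiagonal.mem_antidiagonal]
  constructor
  · rintro ⟨k, hk, rfl⟩; omega
  · intro h; exact ⟨p.1 + p.2, by omega, rfl⟩

lemma card_expS (n : ℕ) : (expS n).card = (n+2).choose 2 := by
  have hdisj : ∀ k₁ ∈ Finset.range (n+1), ∀ k₂ ∈ Finset.range (n+1), k₁ ≠ k₂ →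
      Disjoint (Finset.HasAntidiagonal.antidiagonal k₁) (Finset.HasAntidiagonal.antidiagonal k₂) := by
    intro k₁ _ k₂ _ hne
    refine Finset.disjoint_left.2 fun p hp1 hp2 => ?_
    simp only [Finset.HasAntidiagonal.mem_antidiagonal] at hp1 hp2
    exact hne (hp1 ▸ hp2 ▸ rfl)
  rw [expS, Finset.card_biUnion hdisj]
  simp only [Nat.card_antidiagonal]
  clear hdisj
  induction n with
  | zero => decide
  | succ n ih =>
      rw [Finset.sum_range_succ, ih]
      have : (n + 1 + 2).choose 2 = (n+2).choose 1 + (n+2).choose 2 := by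
        show (n + 3).choose 2 = _
        rw [show n + 3 = (n+2) + 1 from rfl, Nat.choose_succ_succ]
      rw [this, Nat.choose_one_right]
      ring

/-- Taylor coefficient weight of the function `x^a e^{bx}`. -/
def wcoef (p : ℕ × ℕ) (j : ℕ) : ℂ :=
  if p.1 ≤ j then (p.2 : ℂ) ^ (j - p.1) / (Nat.factorial (j - p.1)) else 0

lemma hasSum_wcoef (p : ℕ × ℕ) (x : ℂ) :
    HasSum (fun j => wcoef p j * x ^ j) (x ^ p.1 * Complex.exp (p.2 * x)) := by
  have hbase : HasSum (fun m : ℕ => ((p.2 : ℂ) * x) ^ m / (Nat.factorial m))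
      (Complex.exp ((p.2 : ℂ) * x)) := by
    rw [Complex.exp_eq_exp_ℂ]
    exact NormedSpace.expSeries_div_hasSum_exp _
  have h2 := hbase.mul_left (x ^ p.1)
  have hinj : Function.Injective (fun m : ℕ => m + p.1) := fun a b h => by simpa using h
  refine (Function.Injective.hasSum_iff hinj ?_).1 ?_
  · intro j hj
    have : ¬ p.1 ≤ j := by
      intro hle
      exact hj ⟨j - p.1, show j - p.1 + p.1 = j by omega⟩
    simp [wcoef, this]
  · convert h2 using 1
    · rfl
    funext m
    simp only [Function.comp_apply, wcoef, if_pos (Nat.le_add_left p.1 m),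
      Nat.add_sub_cancel, mul_pow, pow_add]
    ring

/-- The polynomial associated to a coefficient vector. -/
def Pc (n : ℕ) (c : {p // p ∈ expS n} → ℂ) : MvPolynomial (Fin 2) ℂ :=
  ∑ p ∈ (expS n).attach,
    MvPolynomial.monomial (Finsupp.single (0 : Fin 2) p.1.1 + Finsupp.single (1 : Fin 2) p.1.2) (c p)

lemma dinj : Function.Injective
    (fun p : ℕ × ℕ => Finsupp.single (0 : Fin 2) p.1 + Finsupp.single (1 : Fin 2) p.2) := by
  intro p q h
  simp only at h
  have h0 := DFunLike.congr_fun h 0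
  have h1 := DFunLike.congr_fun h 1
  simp [Finsupp.single_apply] at h0 h1
  exact Prod.ext h0 h1

lemma Pc_ne_zero {n : ℕ} {c} (hc : c ≠ 0) : Pc n c ≠ 0 := by
  obtain ⟨p, hp⟩ : ∃ p, c p ≠ 0 := by
    by_contra h; push_neg at h; exact hc (funext h)
  intro h0
  have := congrArg (MvPolynomial.coeff
    (Finsupp.single (0 : Fin 2) p.1.1 + Finsupp.single (1 : Fin 2) p.1.2)) h0
  rw [Pc] at this
  rw [MvPolynomial.coeff_sum] at this
  simp only [MvPolynomial.coeff_monomial, MvPolynomial.coeff_zero] at this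
  rw [Finset.sum_eq_single p] at this
  · simp at this; exact hp this
  · intro q _ hqp
    rw [if_neg]
    intro heq
    exact hqp (Subtype.ext (dinj heq))
  · intro hmem; exact absurd (Finset.mem_attach _ p) hmem

lemma totalDegree_Pc_le {n : ℕ} (c) : (Pc n c).totalDegree ≤ n := by
  refine le_trans (MvPolynomial.totalDegree_finset_sum _ _) ?_
  refine Finset.sup_le fun p _ => ?_
  refine le_trans (MvPolynomial.totalDegree_monomial_le _ _) ?_
  rw [Finsupp.sum_add_index (by simp) (by simp),
    Finsupp.sum_single_index (by rfl), Finsupp.sum_single_index (by rfl)]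
  have := mem_expS.1 p.2
  simp only [id_eq]
  omega

lemma eval_Pc {n : ℕ} (c) (x : ℂ) :
    MvPolynomial.eval ![x, Complex.exp x] (Pc n c) =
      ∑ p ∈ (expS n).attach, c p * (x ^ p.1.1 * Complex.exp (p.1.2 * x)) := by
  rw [Pc, map_sum]
  refine Finset.sum_congr rfl fun p _ => ?_
  rw [MvPolynomial.eval_monomial]
  rw [Finsupp.prod_add_index (by simp) (by intros; rw [pow_add])]
  rw [Finsupp.prod_single_index (by rw [pow_zero]), Finsupp.prod_single_index (by rw [pow_zero])]
  simp only [Matrix.cons_val_zero, Matrix.cons_val_one, Matrix.head_cons]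
  rw [← Complex.exp_nat_mul]

/-- Taylor coefficients of `x ↦ eval ![x, exp x] (Pc n c)`. -/
def tcoef (n : ℕ) (c : {p // p ∈ expS n} → ℂ) (j : ℕ) : ℂ :=
  ∑ p ∈ (expS n).attach, c p * wcoef p.1 j

lemma hasSum_tcoef (n : ℕ) (c) (x : ℂ) :
    HasSum (fun j => tcoef n c j * x ^ j)
      (MvPolynomial.eval ![x, Complex.exp x] (Pc n c)) := by
  rw [eval_Pc]
  have h := hasSum_sum (s := (expS n).attach)
    (f := fun p j => c p * (wcoef p.1 j * x ^ j))
    (a := fun p => c p * (x ^ p.1.1 * Complex.exp (p.1.2 * x)))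
    (fun p _ => (hasSum_wcoef p.1 x).mul_left (c p))
  convert h using 1
  funext j
  rw [tcoef, Finset.sum_mul]
  exact Finset.sum_congr rfl fun p _ => by ring

end DoublingAuxSection


/-- For every `n ≥ 1`, the supremum over `r > 0` and nonzero bivariate
polynomials `P` of total degree at most `n` of the doubling ratio
`max_{0≤x≤2r} |P(x, eˣ)| / max_{0≤x≤r} |P(x, eˣ)|` is at least `2^{(n+2 choose 2) - 1}`:
for every `ε > 0` there are `r > 0` and `P ≠ 0` with `deg P ≤ n` such that
`max_{0≤x≤2r} |P(x, eˣ)| ≥ (2^{(n+2 choose 2)-1} - ε) · max_{0≤x≤r} |P(x, eˣ)|`.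
(Hence `φ(n) = n²` is the best possible exponent function.) -/
theorem doubling_sup_ge_two_pow (n : ℕ) (hn : 1 ≤ n) :
    ∀ ε > (0 : ℝ), ∃ r > (0 : ℝ), ∃ P : MvPolynomial (Fin 2) ℂ,
      P ≠ 0 ∧ P.totalDegree ≤ n ∧
      ((2 : ℝ) ^ ((n + 2).choose 2 - 1) - ε) *
          sSup ((fun x : ℝ => ‖MvPolynomial.eval ![(x : ℂ), Complex.exp x] P‖) ''
            Set.Icc 0 r) ≤
        sSup ((fun x : ℝ => ‖MvPolynomial.eval ![(x : ℂ), Complex.exp x] P‖) ''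
          Set.Icc 0 (2 * r)) := by
  classical
  intro ε hε
  set M : ℕ := (n + 2).choose 2 - 1 with hM
  let L : ({p // p ∈ expS n} → ℂ) →ₗ[ℂ] (Fin M → ℂ) :=
    { toFun := fun c j => tcoef n c (j : ℕ)
      map_add' := by
        intro a b; funext j
        simp [tcoef, add_mul, Finset.sum_add_distrib]
      map_smul' := by
        intro s a; funext j
        simp [tcoef, Finset.mul_sum, mul_assoc] }
  have hchoose : 1 ≤ (n + 2).choose 2 := Nat.choose_pos (by omega)
  have hnotinj : ¬ Function.Injective L := by
    intro hinj
    have hle := LinearMap.finrank_le_finrank_of_injective hinj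
    rw [Module.finrank_fintype_fun_eq_card, Module.finrank_fintype_fun_eq_card,
      Fintype.card_coe, card_expS, Fintype.card_fin] at hle
    omega
  obtain ⟨a, b, hab, hne⟩ := Function.not_injective_iff.1 hnotinj
  set c := a - b with hcdef
  have hc0 : c ≠ 0 := sub_ne_zero.2 hne
  have hLc : L c = 0 := by rw [hcdef, map_sub, hab, sub_self]
  have ht0 : ∀ j < M, tcoef n c j = 0 := by
    intro j hj
    exact congrFun hLc ⟨j, hj⟩
  clear hLc hnotinj hab hne hcdef
  clear L
  clear_value c M
  by_cases hall : ∀ j, tcoef n c j = 0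
  · -- the associated function vanishes identically; any r works
    refine ⟨1, one_pos, Pc n c, Pc_ne_zero hc0, totalDegree_Pc_le c, ?_⟩
    have hzero : ∀ x : ℝ, MvPolynomial.eval ![(x : ℂ), Complex.exp x] (Pc n c) = 0 := by
      intro x
      have h := hasSum_tcoef n c x
      simp only [hall, zero_mul] at h
      exact (h.unique hasSum_zero)
    have h1 : ∀ r' : ℝ,
        sSup ((fun x : ℝ => ‖MvPolynomial.eval ![(x : ℂ), Complex.exp x] (Pc n c)‖) ''
          Set.Icc 0 r') = 0 := by
      intro r'
      apply le_antisymm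
      · apply Real.sSup_le _ le_rfl
        rintro y ⟨x, _, rfl⟩
        simp [hzero]
      · apply Real.sSup_nonneg
        rintro y ⟨x, _, rfl⟩
        positivity
    rw [h1, h1, mul_zero]
  · push_neg at hall
    have hex : ∃ j, tcoef n c j ≠ 0 := hall
    set m := Nat.find hex with hmdef
    have hm : tcoef n c m ≠ 0 := Nat.find_spec hex
    have hmin : ∀ j < m, tcoef n c j = 0 := fun j hj => not_not.1 (Nat.find_min hex hj)
    clear_value m
    clear hmdef
    have hmM : M ≤ m := by
      by_contra h
      push_neg at h
      exact hm (ht0 m h)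
    set T := ‖tcoef n c m‖ with hT
    have hT0 : 0 < T := norm_pos_iff.2 hm
    have hs2 : Summable (fun j => tcoef n c j * (2 : ℂ) ^ j) := (hasSum_tcoef n c 2).summable
    have hsn2 : Summable (fun j => ‖tcoef n c j * (2 : ℂ) ^ j‖) := summable_norm_iff.2 hs2
    have hsn : Summable (fun j => ‖tcoef n c j‖) := by
      refine Summable.of_nonneg_of_le (fun j => norm_nonneg _) (fun j => ?_) hsn2
      rw [norm_mul, norm_pow]
      have h2 : (1 : ℝ) ≤ ‖(2 : ℂ)‖ ^ j := by
        apply one_le_pow₀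
        rw [Complex.norm_ofNat]
        norm_num
      nlinarith [norm_nonneg (tcoef n c j)]
    set A := ∑' j, ‖tcoef n c j‖ with hA
    have hA0 : 0 ≤ A := tsum_nonneg fun j => norm_nonneg _
    -- key Taylor estimate on [0,1]
    have key : ∀ x : ℝ, 0 ≤ x → x ≤ 1 →
        ‖MvPolynomial.eval ![(x : ℂ), Complex.exp x] (Pc n c) - tcoef n c m * (x : ℂ) ^ m‖
          ≤ A * x ^ (m + 1) := by
      intro x hx0 hx1
      have hxn : ‖(x : ℂ)‖ = x := by rw [Complex.norm_real, Real.norm_of_nonneg hx0]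
      have h1 := hasSum_tcoef n c (x : ℂ)
      have h2 : HasSum (fun j => if j = m then tcoef n c m * (x : ℂ) ^ m else 0)
          (tcoef n c m * (x : ℂ) ^ m) := hasSum_ite_eq m _
      have h3 := h1.sub h2
      set g := fun j => tcoef n c j * (x : ℂ) ^ j -
          (if j = m then tcoef n c m * (x : ℂ) ^ m else 0) with hg
      have hb : ∀ j, ‖g j‖ ≤ ‖tcoef n c j‖ * x ^ (m + 1) := by
        intro j
        rcases eq_or_ne j m with rfl | hjm
        · have hgm : g j = 0 := by simp [hg]
          rw [hgm, norm_zero]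
          positivity
        · simp only [hg, if_neg hjm, sub_zero]
          rcases lt_or_ge j m with hlt | hge
          · rw [hmin j hlt]
            simp only [zero_mul, norm_zero]
            positivity
          · have hge' : m + 1 ≤ j := by omega
            rw [norm_mul, norm_pow, hxn]
            have hxp := pow_le_pow_of_le_one hx0 hx1 hge'
            nlinarith [norm_nonneg (tcoef n c j)]
      have hgs : Summable (fun j => ‖g j‖) :=
        Summable.of_nonneg_of_le (fun j => norm_nonneg _) hb (hsn.mul_right _)
      have heq : MvPolynomial.eval ![(x : ℂ), Complex.exp x] (Pc n c) -
          tcoef n c m * (x : ℂ) ^ m = ∑' j, g j := h3.tsum_eq.symm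
      rw [heq]
      calc ‖∑' j, g j‖ ≤ ∑' j, ‖g j‖ := norm_tsum_le_tsum_norm hgs
        _ ≤ ∑' j, ‖tcoef n c j‖ * x ^ (m + 1) := Summable.tsum_le_tsum hb hgs (hsn.mul_right _)
        _ = A * x ^ (m + 1) := by rw [tsum_mul_right]
    -- pointwise bounds
    have htnorm : ∀ x : ℝ, 0 ≤ x → ‖tcoef n c m * (x : ℂ) ^ m‖ = T * x ^ m := by
      intro x hx0
      rw [norm_mul, norm_pow, Complex.norm_real, Real.norm_of_nonneg hx0]
    clear_value T A
    have hub : ∀ x : ℝ, 0 ≤ x → x ≤ 1 →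
        ‖MvPolynomial.eval ![(x : ℂ), Complex.exp x] (Pc n c)‖ ≤ T * x ^ m + A * x ^ (m + 1) := by
      intro x hx0 hx1
      have hk := key x hx0 hx1
      have h4 := norm_sub_norm_le (MvPolynomial.eval ![(x : ℂ), Complex.exp x] (Pc n c))
        (tcoef n c m * (x : ℂ) ^ m)
      rw [htnorm x hx0] at h4
      linarith
    have hlb : ∀ x : ℝ, 0 ≤ x → x ≤ 1 →
        T * x ^ m - A * x ^ (m + 1) ≤
          ‖MvPolynomial.eval ![(x : ℂ), Complex.exp x] (Pc n c)‖ := by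
      intro x hx0 hx1
      have hk := key x hx0 hx1
      have h4 := norm_sub_norm_le (tcoef n c m * (x : ℂ) ^ m)
        (MvPolynomial.eval ![(x : ℂ), Complex.exp x] (Pc n c))
      rw [htnorm x hx0, norm_sub_rev] at h4
      linarith
    -- choice of r
    set r := min (1/2 : ℝ) (ε * T / (2 ^ (m + 2) * (A + 1))) with hrdef
    have hr0 : 0 < r := lt_min (by norm_num) (by positivity)
    have hrhalf : r ≤ 1/2 := min_le_left _ _
    have hr1 : r ≤ 1 := by linarith
    have h2r1 : 2 * r ≤ 1 := by linarith
    have h2r0 : (0 : ℝ) ≤ 2 * r := by linarith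
    have hrmin : r ≤ ε * T / (2 ^ (m + 2) * (A + 1)) := min_le_right _ _
    clear hrdef
    clear_value r
    refine ⟨r, hr0, Pc n c, Pc_ne_zero hc0, totalDegree_Pc_le c, ?_⟩
    have hsup1 : sSup ((fun x : ℝ => ‖MvPolynomial.eval ![(x : ℂ), Complex.exp x] (Pc n c)‖) ''
        Set.Icc 0 r) ≤ T * r ^ m + A * r ^ (m + 1) := by
      apply Real.sSup_le
      · rintro y ⟨x, hx, rfl⟩
        refine le_trans (hub x hx.1 (le_trans hx.2 hr1)) ?_
        gcongr
        · exact hx.1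
        · exact hx.2
        · exact hx.1
        · exact hx.2
      · positivity
    have hbdd2 : BddAbove ((fun x : ℝ => ‖MvPolynomial.eval ![(x : ℂ), Complex.exp x] (Pc n c)‖) ''
        Set.Icc 0 (2 * r)) := by
      refine ⟨T * (2 * r) ^ m + A * (2 * r) ^ (m + 1), ?_⟩
      rintro y ⟨x, hx, rfl⟩
      refine le_trans (hub x hx.1 (le_trans hx.2 h2r1)) ?_
      gcongr
      · exact hx.1
      · exact hx.2
      · exact hx.1
      · exact hx.2
    have hsup2 : T * (2 * r) ^ m - A * (2 * r) ^ (m + 1) ≤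
        sSup ((fun x : ℝ => ‖MvPolynomial.eval ![(x : ℂ), Complex.exp x] (Pc n c)‖) ''
          Set.Icc 0 (2 * r)) := by
      refine le_trans (hlb (2 * r) h2r0 h2r1) ?_
      exact le_csSup hbdd2 ⟨2 * r, ⟨h2r0, le_rfl⟩, rfl⟩
    rcases le_or_gt ((2 : ℝ) ^ M - ε) 0 with hK | hK
    · have hs1n : (0 : ℝ) ≤ sSup ((fun x : ℝ =>
          ‖MvPolynomial.eval ![(x : ℂ), Complex.exp x] (Pc n c)‖) '' Set.Icc 0 r) := by
        apply Real.sSup_nonneg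
        rintro y ⟨x, _, rfl⟩
        positivity
      have hs2n : (0 : ℝ) ≤ sSup ((fun x : ℝ =>
          ‖MvPolynomial.eval ![(x : ℂ), Complex.exp x] (Pc n c)‖) '' Set.Icc 0 (2 * r)) := by
        apply Real.sSup_nonneg
        rintro y ⟨x, _, rfl⟩
        positivity
      nlinarith
    · have h2M : (2 : ℝ) ^ M ≤ 2 ^ m := pow_le_pow_right₀ one_le_two hmM
      have hrA : r * A * 2 ^ (m + 2) ≤ ε * T := by
        have h1 := hrmin
        rw [le_div_iff₀ (by positivity)] at h1
        nlinarith [hr0.le, hA0, pow_pos (two_pos (α := ℝ)) (m + 2)]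
      have harith : ((2 : ℝ) ^ M - ε) * (T + r * A) ≤ 2 ^ m * T - 2 ^ (m + 1) * (r * A) := by
        have e1 : (2 : ℝ) ^ (m + 1) = 2 * 2 ^ m := by ring
        have e2 : (2 : ℝ) ^ (m + 2) = 4 * 2 ^ m := by ring
        nlinarith [mul_nonneg hr0.le hA0, hT0.le, hε.le,
          mul_nonneg (mul_nonneg hr0.le hA0) (pow_pos (two_pos (α := ℝ)) m).le,
          mul_le_mul_of_nonneg_right h2M (mul_nonneg hr0.le hA0)]
      calc ((2 : ℝ) ^ M - ε) *
            sSup ((fun x : ℝ => ‖MvPolynomial.eval ![(x : ℂ), Complex.exp x] (Pc n c)‖) ''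
              Set.Icc 0 r)
          ≤ ((2 : ℝ) ^ M - ε) * (T * r ^ m + A * r ^ (m + 1)) :=
            mul_le_mul_of_nonneg_left hsup1 hK.le
        _ ≤ T * (2 * r) ^ m - A * (2 * r) ^ (m + 1) := by
            have h := mul_le_mul_of_nonneg_left harith (pow_nonneg hr0.le m)
            have e : ((2 : ℝ) ^ M - ε) * (T * r ^ m + A * r ^ (m + 1)) =
                r ^ m * (((2 : ℝ) ^ M - ε) * (T + r * A)) := by ring
            have e2 : T * (2 * r) ^ m - A * (2 * r) ^ (m + 1) =
                r ^ m * ((2 : ℝ) ^ m * T - 2 ^ (m + 1) * (r * A)) := by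
              rw [mul_pow, mul_pow]; ring
            rw [e, e2]
            exact h
        _ ≤ sSup ((fun x : ℝ => ‖MvPolynomial.eval ![(x : ℂ), Complex.exp x] (Pc n c)‖) ''
              Set.Icc 0 (2 * r)) := hsup2
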